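/- Lemma (the paper's Lemma 4.7). Let r be an order with levels on X, let (τ₀, ω₀) be a persistence pair of r, and let ε > 0. Then the chain z₁ := ω₀ + Σ_{ω ∈ K_V(G(r̂ ≥ r̂(τ₀)+ε), ω₀), ω ≠ ω₀} ω is a feasible chain; in particular K_V(G(r̂ ≥ r̂(τ₀)+ε), ω₀) ∖ {ω₀} ⊆ F_{ε,n} and τ*(∂z₁) = 0 for every τ ∈ F_{ε,n−1}. -/

import Mathlib

open scoped Classical

namespace StableVol

/-- A finite abstract simplicial complex of dimension `n`: a finite family of nonempty
finite subsets of the vertex set, closed under nonempty subsets, in which every element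
is contained in an element of cardinality `n+1`. -/
structure NComplex (V : Type*) [DecidableEq V] (n : ℕ) where
  X : Finset (Finset V)
  nonempty_mem : ∀ σ ∈ X, σ.Nonempty
  down_closed : ∀ σ ∈ X, ∀ σ' : Finset V, σ' ⊆ σ → σ'.Nonempty → σ' ∈ X
  contained_top : ∀ σ ∈ X, ∃ ω ∈ X, σ ⊆ ω ∧ ω.card = n + 1

variable {V : Type*} [DecidableEq V] {n : ℕ}

/-- An `n`-cell is either an `n`-simplex (`some ω`) or the formal cell `ω∞` (`none`). -/
abbrev Cell (V : Type*) := Option (Finset V)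

/-- `τ` is a face of the cell `c`.  For `c = some ω` this means that `ω` is an
`n`-simplex of `X` containing `τ`; the faces of `ω∞ = none` are the `(n-1)`-simplices
having exactly one `n`-simplex coface. -/
def faceCell (C : NComplex V n) (τ : Finset V) : Cell V → Prop
  | some ω => ω ∈ C.X ∧ ω.card = n + 1 ∧ τ ⊆ ω
  | none => {ω | ω ∈ C.X ∧ ω.card = n + 1 ∧ τ ⊆ ω}.ncard = 1

def IsCell (C : NComplex V n) : Cell V → Prop
  | some ω => ω ∈ C.X ∧ ω.card = n + 1
  | none => True

/-- Adjacency in the dual graph, restricted to the edge set `E ⊆ X^(n-1)`. -/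
def adj (C : NComplex V n) (E : Set (Finset V)) (c c' : Cell V) : Prop :=
  ∃ τ ∈ E, faceCell C τ c ∧ faceCell C τ c' ∧ c ≠ c'

/-- `KV C E c₀`: the set of `n`-cells in the connected component of `c₀` in the
subgraph of the dual graph with edge set `E`. -/
def KV (C : NComplex V n) (E : Set (Finset V)) (c₀ : Cell V) : Set (Cell V) :=
  {c | Relation.ReflTransGen (adj C E) c₀ c}

/-- Every `(n-1)`-simplex of `X` is a face of exactly two `n`-cells. -/
def TwoCofaces (C : NComplex V n) : Prop :=
  ∀ τ ∈ C.X, τ.card = n →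
    ∃ c₁ c₂ : Cell V, c₁ ≠ c₂ ∧ ∀ c : Cell V, faceCell C τ c ↔ (c = c₁ ∨ c = c₂)

/-- The dual graph (with full edge set `X^(n-1)`) is connected. -/
def DualConn (C : NComplex V n) : Prop :=
  ∀ c c' : Cell V, IsCell C c → IsCell C c' →
    c' ∈ KV C {τ | τ ∈ C.X ∧ τ.card = n} c

/-- A level function: monotone with respect to strict inclusion of simplices. -/
def IsLevelFun (C : NComplex V n) (lev : Finset V → ℝ) : Prop :=
  ∀ σ ∈ C.X, ∀ σ' ∈ C.X, σ ⊂ σ' → lev σ ≤ lev σ'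

/-- `(lev, slt)` is an order with levels on `X`: `lev` is a level function and `slt`
is (the strict form of) a linear order on `X` refining both `lev` and strict
inclusion. -/
def IsOWL (C : NComplex V n) (lev : Finset V → ℝ)
    (slt : Finset V → Finset V → Prop) : Prop :=
  IsLevelFun C lev ∧
  (∀ σ ∈ C.X, ¬ slt σ σ) ∧
  (∀ σ ∈ C.X, ∀ σ' ∈ C.X, ∀ σ'' ∈ C.X, slt σ σ' → slt σ' σ'' → slt σ σ'') ∧
  (∀ σ ∈ C.X, ∀ σ' ∈ C.X, σ ≠ σ' → slt σ σ' ∨ slt σ' σ) ∧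
  (∀ σ ∈ C.X, ∀ σ' ∈ C.X, slt σ σ' → lev σ ≤ lev σ') ∧
  (∀ σ ∈ C.X, ∀ σ' ∈ C.X, σ ⊂ σ' → slt σ σ')

/-- Extension of a strict order on simplices to `n`-cells, `ω∞ = none` being the
unique maximum. -/
def cslt (slt : Finset V → Finset V → Prop) : Cell V → Cell V → Prop
  | some σ, some σ' => slt σ σ'
  | some _, none => True
  | none, _ => False

/-- `m` is the maximum cell of the set `S` with respect to the order `slt`. -/
def IsMaxCell (slt : Finset V → Finset V → Prop) (S : Set (Cell V)) (m : Cell V) :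
    Prop :=
  m ∈ S ∧ ∀ c ∈ S, c ≠ m → cslt slt c m

/-- Edge set of `G(≻ σ₀)`: the `(n-1)`-simplices strictly above `σ₀`. -/
def Egt (C : NComplex V n) (slt : Finset V → Finset V → Prop) (σ₀ : Finset V) :
    Set (Finset V) :=
  {τ | τ ∈ C.X ∧ τ.card = n ∧ slt σ₀ τ}

/-- Edge set of `G(⪰ σ₀)`. -/
def Ege (C : NComplex V n) (slt : Finset V → Finset V → Prop) (σ₀ : Finset V) :
    Set (Finset V) :=
  {τ | τ ∈ C.X ∧ τ.card = n ∧ (τ = σ₀ ∨ slt σ₀ τ)}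

/-- Edge set of `G(lev ≥ s)`. -/
def Elev (C : NComplex V n) (lev : Finset V → ℝ) (s : ℝ) : Set (Finset V) :=
  {τ | τ ∈ C.X ∧ τ.card = n ∧ s ≤ lev τ}

/-- `(τ₀, ω₀)` is a persistence pair of the order `slt`: the two `n`-cells having
`τ₀` as a face lie in distinct connected components of `G(≻ τ₀)`, and `ω₀` is the
smaller of the two maximum cells of these two components. -/
def IsPersPair (C : NComplex V n) (slt : Finset V → Finset V → Prop)
    (τ₀ ω₀ : Finset V) : Prop :=
  τ₀ ∈ C.X ∧ τ₀.card = n ∧ ω₀ ∈ C.X ∧ ω₀.card = n + 1 ∧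
  ∃ c₁ c₂ : Cell V, c₁ ≠ c₂ ∧ faceCell C τ₀ c₁ ∧ faceCell C τ₀ c₂ ∧
    c₂ ∉ KV C (Egt C slt τ₀) c₁ ∧
    ∃ m₂ : Cell V,
      IsMaxCell slt (KV C (Egt C slt τ₀) c₁) (some ω₀) ∧
      IsMaxCell slt (KV C (Egt C slt τ₀) c₂) m₂ ∧
      cslt slt (some ω₀) m₂

/-- The optimal volume `OV(q, ω₀) = K_V(G(≻_q τ_{q,ω₀}), ω₀)`. -/
def OV (C : NComplex V n) (slt : Finset V → Finset V → Prop) (ω₀ : Finset V) :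
    Set (Cell V) :=
  {c | ∃ τ, IsPersPair C slt τ ω₀ ∧ c ∈ KV C (Egt C slt τ) (some ω₀)}

/-- The stable volume `SV_ε(r, τ₀, ω₀) = K_V(G(r̂ ≥ r̂(τ₀) + ε), ω₀)`. -/
def SV (C : NComplex V n) (lev : Finset V → ℝ) (τ₀ ω₀ : Finset V) (ε : ℝ) :
    Set (Cell V) :=
  KV C (Elev C lev (lev τ₀ + ε)) (some ω₀)

/-- `(qlev, qslt) ∈ R_ε`: an order with levels uniformly `ε/2`-close to `rlev`
satisfying the `(r, ω₀)`-order condition. -/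
def InR (C : NComplex V n) (rlev : Finset V → ℝ)
    (rslt : Finset V → Finset V → Prop) (ω₀ : Finset V) (ε : ℝ)
    (qlev : Finset V → ℝ) (qslt : Finset V → Finset V → Prop) : Prop :=
  IsOWL C qlev qslt ∧ (∀ σ ∈ C.X, |qlev σ - rlev σ| < ε / 2) ∧
  (∀ σ ∈ C.X, rslt σ ω₀ → qslt σ ω₀)

/-- `F_{ε,n}`: the `n`-simplices with level at least `lev τ₀ + ε` that precede `ω₀`. -/
def Fcells (C : NComplex V n) (lev : Finset V → ℝ)
    (slt : Finset V → Finset V → Prop) (τ₀ ω₀ : Finset V) (ε : ℝ) :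
    Set (Finset V) :=
  {σ | σ ∈ C.X ∧ σ.card = n + 1 ∧ lev τ₀ + ε ≤ lev σ ∧ slt σ ω₀}

/-- `F_{ε,n-1}`: the `(n-1)`-simplices with level at least `lev τ₀ + ε` that
precede `ω₀`. -/
def Fedges (C : NComplex V n) (lev : Finset V → ℝ)
    (slt : Finset V → Finset V → Prop) (τ₀ ω₀ : Finset V) (ε : ℝ) :
    Set (Finset V) :=
  {σ | σ ∈ C.X ∧ σ.card = n ∧ lev τ₀ + ε ≤ lev σ ∧ slt σ ω₀}

/-- `τ*(∂z)`: the `ℤ/2ℤ`-sum of the coefficients of `z` over the `n`-simplex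
cofaces of `τ`. -/
def bsum (C : NComplex V n) (τ : Finset V) (z : Finset V → ZMod 2) : ZMod 2 :=
  ∑ ω ∈ C.X.filter (fun ω => ω.card = n + 1 ∧ τ ⊆ ω), z ω

/-- A feasible chain `z = ω₀ + Σ_{ω ∈ F_{ε,n}} α_ω ω` with `τ*(∂z) = 0` for all
`τ ∈ F_{ε,n-1}`. -/
def IsFeasible (C : NComplex V n) (lev : Finset V → ℝ)
    (slt : Finset V → Finset V → Prop) (τ₀ ω₀ : Finset V) (ε : ℝ)
    (z : Finset V → ZMod 2) : Prop :=
  z ω₀ = 1 ∧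
  (∀ ω : Finset V, ω ≠ ω₀ → ω ∉ Fcells C lev slt τ₀ ω₀ ε → z ω = 0) ∧
  (∀ τ ∈ Fedges C lev slt τ₀ ω₀ ε, bsum C τ z = 0)

/-- `‖z‖₀`: the number of simplices of `X` with nonzero coefficient in `z`. -/
def norm0 (C : NComplex V n) (z : Finset V → ZMod 2) : ℕ :=
  (C.X.filter fun ω => z ω ≠ 0).card

/-- The level function of the perturbed order `q(r, η, A)`. -/
noncomputable def pertLev (C : NComplex V n) (rlev : Finset V → ℝ) (η : ℝ)
    (A : Set (Finset V)) : Finset V → ℝ :=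
  fun σ => if (σ ∈ C.X ∧ σ.card = n + 1) ∨ σ ∈ A then rlev σ + η else rlev σ - η

/-- The strict order of the perturbed order `q(r, η, A)`. -/
def pertSlt (C : NComplex V n) (rlev : Finset V → ℝ)
    (rslt : Finset V → Finset V → Prop) (η : ℝ) (A : Set (Finset V)) :
    Finset V → Finset V → Prop :=
  fun σ σ' => pertLev C rlev η A σ < pertLev C rlev η A σ' ∨
    (pertLev C rlev η A σ = pertLev C rlev η A σ' ∧ rslt σ σ')

/-- The `(n-1)`-simplices that are edges of the connected component of `c₀` in the
subgraph with edge set `E`. -/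
def compEdges (C : NComplex V n) (E : Set (Finset V)) (c₀ : Cell V) :
    Set (Finset V) :=
  {τ | τ ∈ E ∧ ∃ c, faceCell C τ c ∧ c ∈ KV C E c₀}

/-- `IsPath C E c c' vs es`: `vs` is the vertex list and `es` the edge list of a walk
from `c` to `c'` in the subgraph of the dual graph with edge set `E`. -/
inductive IsPath (C : NComplex V n) (E : Set (Finset V)) :
    Cell V → Cell V → List (Cell V) → List (Finset V) → Prop
  | nil (c : Cell V) : IsPath C E c c [c] []
  | cons {c c' c'' : Cell V} {vs : List (Cell V)} {es : List (Finset V)}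
      {τ : Finset V} : τ ∈ E → faceCell C τ c → faceCell C τ c' → c ≠ c' →
      IsPath C E c' c'' vs es → IsPath C E c c'' (c :: vs) (τ :: es)


/-- Lemma 4.7: the indicator chain of `K_V(G(r̂ ≥ r̂(τ₀)+ε), ω₀)`
is a feasible chain; in particular the component is contained in `{ω₀} ∪ F_{ε,n}`
and all boundary conditions hold. -/

lemma adj_symm {C : NComplex V n} {E : Set (Finset V)} {c c' : Cell V}
    (h : adj C E c c') : adj C E c' c := by
  obtain ⟨τ, hτ, h1, h2, hne⟩ := h
  exact ⟨τ, hτ, h2, h1, hne.symm⟩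

lemma KV_mono {C : NComplex V n} {E E' : Set (Finset V)} (hEE : E ⊆ E')
    (c₀ : Cell V) : KV C E c₀ ⊆ KV C E' c₀ := by
  intro c hc
  refine Relation.ReflTransGen.mono ?_ _ _ hc
  rintro x y ⟨τ, hτ, h1, h2, hne⟩
  exact ⟨τ, hEE hτ, h1, h2, hne⟩

lemma KV_last {C : NComplex V n} {E : Set (Finset V)} {c₀ c : Cell V}
    (hc : c ∈ KV C E c₀) : c = c₀ ∨ ∃ τ ∈ E, faceCell C τ c := by
  induction hc with
  | refl => exact Or.inl rfl
  | tail _ hadj _ =>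
    obtain ⟨τ, hτ, _, h2, _⟩ := hadj
    exact Or.inr ⟨τ, hτ, h2⟩


theorem component_indicator_is_feasible
    (hn : 2 ≤ n) (C : NComplex V n) (htwo : TwoCofaces C) (hconn : DualConn C)
    (rlev : Finset V → ℝ) (rslt : Finset V → Finset V → Prop)
    (hr : IsOWL C rlev rslt)
    (τ₀ ω₀ : Finset V) (hpair : IsPersPair C rslt τ₀ ω₀)
    (ε : ℝ) (hε : 0 < ε) :
    ∀ z₁ : Finset V → ZMod 2,
      (∀ ω : Finset V,
        z₁ ω = if (some ω : Cell V) ∈ SV C rlev τ₀ ω₀ ε then 1 else 0) →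
      IsFeasible C rlev rslt τ₀ ω₀ ε z₁ ∧
      (∀ c ∈ SV C rlev τ₀ ω₀ ε, c ≠ (some ω₀ : Cell V) →
        ∃ ω ∈ Fcells C rlev rslt τ₀ ω₀ ε, c = some ω) ∧
      (∀ τ ∈ Fedges C rlev rslt τ₀ ω₀ ε, bsum C τ z₁ = 0) := by
  intro z₁ hz
  obtain ⟨hlev, hirr, htrans, htot, hcomp, hsub⟩ := hr
  obtain ⟨hτ₀X, hτ₀c, hω₀X, hω₀c, c₁, c₂, hc12, hf1, hf2, hnc, m₂, hmax₁, hmax₂, hlt⟩ := hpair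
  -- Elev ⊆ Egt
  have hEsub : Elev C rlev (rlev τ₀ + ε) ⊆ Egt C rslt τ₀ := by
    rintro τ ⟨hτX, hτc, hτl⟩
    refine ⟨hτX, hτc, ?_⟩
    have hne : τ ≠ τ₀ := by rintro rfl; linarith
    rcases htot τ₀ hτ₀X τ hτX (Ne.symm hne) with h | h
    · exact h
    · have := hcomp τ hτX τ₀ hτ₀X h; linarith
  have hω₀K : (some ω₀ : Cell V) ∈ KV C (Egt C rslt τ₀) c₁ := hmax₁.1
  -- every cell of SV is either ω₀ or an n-simplex of F_{ε,n}
  have hkey : ∀ c ∈ SV C rlev τ₀ ω₀ ε, c = some ω₀ ∨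
      ∃ ω ∈ Fcells C rlev rslt τ₀ ω₀ ε, c = some ω := by
    intro c hc
    by_cases hcω : c = some ω₀
    · exact Or.inl hcω
    right
    have hc1 : c ∈ KV C (Egt C rslt τ₀) c₁ :=
      Relation.ReflTransGen.trans hω₀K (KV_mono hEsub _ hc)
    have hclt := hmax₁.2 c hc1 hcω
    obtain ⟨ω, rfl⟩ : ∃ ω, c = some ω := by
      cases c with
      | none => exact absurd hclt (by simp [cslt])
      | some ω => exact ⟨ω, rfl⟩
    rcases KV_last hc with h | ⟨τ, hτE, hface⟩
    · exact absurd h hcω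
    obtain ⟨hτX, hτc, hτl⟩ := hτE
    obtain ⟨hωX, hωc, hτω⟩ : ω ∈ C.X ∧ ω.card = n + 1 ∧ τ ⊆ ω := hface
    have hss : τ ⊂ ω := by
      refine Finset.ssubset_iff_subset_ne.mpr ⟨hτω, ?_⟩
      intro h; rw [h] at hτc; omega
    have hll : rlev τ ≤ rlev ω := hlev τ hτX ω hωX hss
    exact ⟨ω, ⟨hωX, hωc, by linarith, hclt⟩, rfl⟩
  have hnone : (none : Cell V) ∉ SV C rlev τ₀ ω₀ ε := by
    intro h
    rcases hkey none h with h' | ⟨ω, _, h'⟩ <;> exact Option.some_ne_none _ h'.symm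
  -- boundary condition
  have hbd : ∀ τ ∈ Fedges C rlev rslt τ₀ ω₀ ε, bsum C τ z₁ = 0 := by
    rintro τ ⟨hτX, hτc, hτl, hτs⟩
    have hτE : τ ∈ Elev C rlev (rlev τ₀ + ε) := ⟨hτX, hτc, hτl⟩
    obtain ⟨d₁, d₂, hd, hiff⟩ := htwo τ hτX hτc
    have hadj : adj C (Elev C rlev (rlev τ₀ + ε)) d₁ d₂ :=
      ⟨τ, hτE, (hiff d₁).mpr (Or.inl rfl), (hiff d₂).mpr (Or.inr rfl), hd⟩
    have hfilt : ∀ ω : Finset V, (ω ∈ C.X ∧ ω.card = n + 1 ∧ τ ⊆ ω) ↔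
        ((some ω : Cell V) = d₁ ∨ (some ω : Cell V) = d₂) := fun ω => hiff (some ω)
    match d₁, d₂, hd, hadj, hfilt with
    | none, none, hd, _, _ => exact absurd rfl hd
    | some ω₁, some ω₂, hd, hadj, hfilt =>
      have hne12 : ω₁ ≠ ω₂ := fun h => hd (by rw [h])
      have hset : C.X.filter (fun ω => ω.card = n + 1 ∧ τ ⊆ ω) = {ω₁, ω₂} := by
        ext ω
        simp only [Finset.mem_filter, Finset.mem_insert, Finset.mem_singleton]
        constructor
        · rintro ⟨h1, h2, h3⟩
          rcases (hfilt ω).mp ⟨h1, h2, h3⟩ with h | h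
          · exact Or.inl (Option.some_injective _ h)
          · exact Or.inr (Option.some_injective _ h)
        · rintro (rfl | rfl)
          · have := (hfilt ω).mpr (Or.inl rfl); exact ⟨this.1, this.2⟩
          · have := (hfilt ω).mpr (Or.inr rfl); exact ⟨this.1, this.2⟩
      rw [bsum, hset, Finset.sum_pair hne12, hz ω₁, hz ω₂]
      by_cases h : (some ω₁ : Cell V) ∈ SV C rlev τ₀ ω₀ ε
      · have h2 : (some ω₂ : Cell V) ∈ SV C rlev τ₀ ω₀ ε :=
          Relation.ReflTransGen.tail h hadj
        rw [if_pos h, if_pos h2]; decide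
      · have h2 : (some ω₂ : Cell V) ∉ SV C rlev τ₀ ω₀ ε := fun h2 =>
          h (Relation.ReflTransGen.tail h2 (adj_symm hadj))
        rw [if_neg h, if_neg h2]; decide
    | some ω₁, none, hd, hadj, hfilt =>
      have hset : C.X.filter (fun ω => ω.card = n + 1 ∧ τ ⊆ ω) = {ω₁} := by
        ext ω
        simp only [Finset.mem_filter, Finset.mem_singleton]
        constructor
        · rintro ⟨h1, h2, h3⟩
          rcases (hfilt ω).mp ⟨h1, h2, h3⟩ with h | h
          · exact Option.some_injective _ h
          · exact absurd h (Option.some_ne_none _)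
        · rintro rfl
          have := (hfilt ω).mpr (Or.inl rfl); exact ⟨this.1, this.2⟩
      rw [bsum, hset, Finset.sum_singleton, hz ω₁, if_neg]
      intro h
      exact hnone (Relation.ReflTransGen.tail h hadj)
    | none, some ω₂, hd, hadj, hfilt =>
      have hset : C.X.filter (fun ω => ω.card = n + 1 ∧ τ ⊆ ω) = {ω₂} := by
        ext ω
        simp only [Finset.mem_filter, Finset.mem_singleton]
        constructor
        · rintro ⟨h1, h2, h3⟩
          rcases (hfilt ω).mp ⟨h1, h2, h3⟩ with h | h
          · exact absurd h (Option.some_ne_none _)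
          · exact Option.some_injective _ h
        · rintro rfl
          have := (hfilt ω).mpr (Or.inr rfl); exact ⟨this.1, this.2⟩
      rw [bsum, hset, Finset.sum_singleton, hz ω₂, if_neg]
      intro h
      exact hnone (Relation.ReflTransGen.tail h (adj_symm hadj))
  refine ⟨⟨?_, ?_, hbd⟩, ?_, hbd⟩
  · rw [hz ω₀, if_pos (show (some ω₀ : Cell V) ∈ SV C rlev τ₀ ω₀ ε from Relation.ReflTransGen.refl)]
  · intro ω hne hnF
    rw [hz ω, if_neg]
    intro h
    rcases hkey (some ω) h with h' | ⟨ω', hF, h'⟩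
    · exact hne (Option.some_injective _ h')
    · rw [Option.some_injective _ h'] at hnF
      exact hnF hF
  · intro c hc hne
    rcases hkey c hc with h | h
    · exact absurd h hne
    · exact h

end StableVol
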